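/- arXiv:1503.02707 — 3 statements merged into one kernel-verified Lean document; each statement's English description precedes it below -/
import Mathlib

section
/- Let D be a nonempty subset of a fuzzy Riesz space X. Then the fuzzy ideal generated by D (the smallest fuzzy ideal of X containing D) exists, is unique, and equals the set I_D = { x ∈ X : there exist x₁,…,x_n ∈ D and a real λ ≥ 0 such that μ(|x|, λ·(|x₁|+…+|x_n|)) > 1/2 }. -/
/-- A fuzzy Riesz space structure on a real vector space `X`:
a fuzzy order `μ : X × X → [0,1]` compatible with the vector structure,
together with binary suprema and infima with respect to the fuzzy order. -/
structure FuzzyRiesz (X : Type*) [AddCommGroup X] [Module ℝ X] where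
  μ : X → X → ℝ
  nonneg : ∀ x y : X, 0 ≤ μ x y
  le_one : ∀ x y : X, μ x y ≤ 1
  refl : ∀ x : X, μ x x = 1
  antisymm : ∀ x y : X, 1 < μ x y + μ y x → x = y
  trans : ∀ x y z : X, min (μ x y) (μ y z) ≤ μ x z
  add_compat : ∀ x y z : X, 1/2 < μ x y → μ x y ≤ μ (x + z) (y + z)
  smul_compat : ∀ (x y : X) (c : ℝ), 0 ≤ c → 1/2 < μ x y → μ x y ≤ μ (c • x) (c • y)
  sup : X → X → X
  inf : X → X → X
  le_sup_left : ∀ x y : X, 1/2 < μ x (sup x y)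
  le_sup_right : ∀ x y : X, 1/2 < μ y (sup x y)
  sup_le : ∀ x y z : X, 1/2 < μ x z → 1/2 < μ y z → 1/2 < μ (sup x y) z
  inf_le_left : ∀ x y : X, 1/2 < μ (inf x y) x
  inf_le_right : ∀ x y : X, 1/2 < μ (inf x y) y
  le_inf : ∀ x y z : X, 1/2 < μ z x → 1/2 < μ z y → 1/2 < μ z (inf x y)

namespace FuzzyRiesz

universe v

variable {X : Type*} [AddCommGroup X] [Module ℝ X]

/-- The absolute value `|x| = x ∨ (−x)`. -/
def fabs (F : FuzzyRiesz X) (x : X) : X := F.sup x (-x)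

/-- `x` is positive: `μ(0,x) > 1/2`. -/
def Pos (F : FuzzyRiesz X) (x : X) : Prop := 1/2 < F.μ 0 x

/-- `S⁺`, the set of positive elements of `S`. -/
def posPart (F : FuzzyRiesz X) (S : Set X) : Set X := {x ∈ S | F.Pos x}

/-- `y` is an upper bound of `A`. -/
def UpperBound (F : FuzzyRiesz X) (A : Set X) (y : X) : Prop := ∀ x ∈ A, 1/2 < F.μ x y

/-- `y` is a lower bound of `A`. -/
def LowerBound (F : FuzzyRiesz X) (A : Set X) (y : X) : Prop := ∀ x ∈ A, 1/2 < F.μ y x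

/-- `z = sup A` in the fuzzy order. -/
def IsSup (F : FuzzyRiesz X) (A : Set X) (z : X) : Prop :=
  F.UpperBound A z ∧ ∀ y : X, F.UpperBound A y → 1/2 < F.μ z y

/-- `z = inf A` in the fuzzy order. -/
def IsInf (F : FuzzyRiesz X) (A : Set X) (z : X) : Prop :=
  F.LowerBound A z ∧ ∀ y : X, F.LowerBound A y → 1/2 < F.μ y z

/-- `z = inf A`, computed relative to the subset `Y` (lower bounds taken in `Y`). -/
def IsInfIn (F : FuzzyRiesz X) (Y A : Set X) (z : X) : Prop :=
  F.LowerBound A z ∧ ∀ y ∈ Y, F.LowerBound A y → 1/2 < F.μ y z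

/-- A set is fuzzy solid if `μ(|x|,|y|) > 1/2` and `y ∈ A` imply `x ∈ A`. -/
def Solid (F : FuzzyRiesz X) (A : Set X) : Prop :=
  ∀ x y : X, 1/2 < F.μ (F.fabs x) (F.fabs y) → y ∈ A → x ∈ A

/-- A fuzzy ideal: a fuzzy solid vector subspace. -/
structure IsIdeal (F : FuzzyRiesz X) (I : Set X) : Prop where
  zero_mem : (0 : X) ∈ I
  add_mem : ∀ {x y : X}, x ∈ I → y ∈ I → x + y ∈ I
  smul_mem : ∀ (c : ℝ) {x : X}, x ∈ I → c • x ∈ I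
  solid : ∀ x y : X, 1/2 < F.μ (F.fabs x) (F.fabs y) → y ∈ I → x ∈ I

/-- A fuzzy ideal of the subspace `Y` (with the restricted fuzzy order and
vector structure): a vector subspace of `Y` that is solid relative to `Y`. -/
structure IsIdealIn (F : FuzzyRiesz X) (Y I : Set X) : Prop where
  subset : I ⊆ Y
  zero_mem : (0 : X) ∈ I
  add_mem : ∀ {x y : X}, x ∈ I → y ∈ I → x + y ∈ I
  smul_mem : ∀ (c : ℝ) {x : X}, x ∈ I → c • x ∈ I
  solid : ∀ x ∈ Y, ∀ y ∈ I, 1/2 < F.μ (F.fabs x) (F.fabs y) → x ∈ I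

/-- A decreasing net. -/
def Decreasing (F : FuzzyRiesz X) {ι : Type v} [Preorder ι] (y : ι → X) : Prop :=
  ∀ a b : ι, a ≤ b → 1/2 < F.μ (y b) (y a)

/-- An increasing net. -/
def Increasing (F : FuzzyRiesz X) {ι : Type v} [Preorder ι] (x : ι → X) : Prop :=
  ∀ a b : ι, a ≤ b → 1/2 < F.μ (x a) (x b)

/-- The net `x` converges in fuzzy order to `l`: there is a net `y` over the same
index set with `μ(|x_α − l|, y_α) > 1/2` for all `α` and `y_α ↓ 0`. -/
def FuzzyOrderConv (F : FuzzyRiesz X) {ι : Type v} [Preorder ι] (x : ι → X) (l : X) : Prop :=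
  ∃ y : ι → X, (∀ a, 1/2 < F.μ (F.fabs (x a - l)) (y a)) ∧ F.Decreasing y ∧
    F.IsInf (Set.range y) 0

/-- Fuzzy order convergence relative to the subset `Y` (the dominating net lies in `Y`
and its infimum is computed in `Y`). -/
def FuzzyOrderConvIn (F : FuzzyRiesz X) (Y : Set X) {ι : Type v} [Preorder ι]
    (x : ι → X) (l : X) : Prop :=
  ∃ y : ι → X, (∀ a, y a ∈ Y) ∧ (∀ a, 1/2 < F.μ (F.fabs (x a - l)) (y a)) ∧ F.Decreasing y ∧
    F.IsInfIn Y (Set.range y) 0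

/-- `S` is fuzzy σ-order closed: closed under fuzzy order limits of sequences in `S`. -/
def SigmaOrderClosed (F : FuzzyRiesz X) (S : Set X) : Prop :=
  ∀ (x : ℕ → X) (l : X), (∀ n, x n ∈ S) → F.FuzzyOrderConv x l → l ∈ S

/-- `S` is fuzzy order closed: closed under fuzzy order limits of nets in `S`. -/
def OrderClosed (F : FuzzyRiesz X) (S : Set X) : Prop :=
  ∀ (ι : Type v) [Preorder ι] [Nonempty ι] [IsDirected ι (· ≤ ·)],
    ∀ (x : ι → X) (l : X), (∀ a, x a ∈ S) → F.FuzzyOrderConv x l → l ∈ S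

/-- `S` is fuzzy order closed in the subspace `Y`. -/
def OrderClosedIn (F : FuzzyRiesz X) (Y S : Set X) : Prop :=
  ∀ (ι : Type v) [Preorder ι] [Nonempty ι] [IsDirected ι (· ≤ ·)],
    ∀ (x : ι → X) (l : X), (∀ a, x a ∈ S) → l ∈ Y → F.FuzzyOrderConvIn Y x l → l ∈ S

/-- A fuzzy band: a fuzzy order closed fuzzy ideal. -/
def IsBand (F : FuzzyRiesz X) (B : Set X) : Prop := F.IsIdeal B ∧ OrderClosed.{v} F B

/-- A fuzzy band of the subspace `Y`. -/
def IsBandIn (F : FuzzyRiesz X) (Y B : Set X) : Prop := F.IsIdealIn Y B ∧ OrderClosedIn.{v} F Y B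

/-- The disjoint complement `A^d = {x : |x| ∧ |y| = 0 for all y ∈ A}`. -/
def dcomp (F : FuzzyRiesz X) (A : Set X) : Set X :=
  {x : X | ∀ y ∈ A, F.inf (F.fabs x) (F.fabs y) = 0}

/-- The algebraic sum of two subsets. -/
def sumSet (A B : Set X) : Set X := {z : X | ∃ a ∈ A, ∃ b ∈ B, z = a + b}

/-- `S` is fuzzy order dense in `X`. -/
def OrderDense (F : FuzzyRiesz X) (S : Set X) : Prop :=
  ∀ x : X, x ≠ 0 → F.Pos x → ∃ y ∈ S, y ≠ 0 ∧ 1/2 < F.μ y x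

/-- `S` is fuzzy order dense in the subspace `Y`. -/
def OrderDenseIn (F : FuzzyRiesz X) (Y S : Set X) : Prop :=
  ∀ x ∈ Y, x ≠ 0 → F.Pos x → ∃ y ∈ S, y ≠ 0 ∧ 1/2 < F.μ y x

/-- `x` is nonnegative: it is not the case that `μ(x,0) > 1/2`. -/
def Nonneg (F : FuzzyRiesz X) (x : X) : Prop := ¬ (1/2 < F.μ x 0)

/-- `X` is fuzzy Archimedean: for every nonzero nonnegative `x`, the set
`{λ • x : λ > 0}` has no upper bound. -/
def FuzzyArchimedean (F : FuzzyRiesz X) : Prop :=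
  ∀ x : X, x ≠ 0 → F.Nonneg x →
    ¬ ∃ y : X, F.UpperBound {z : X | ∃ c : ℝ, 0 < c ∧ z = c • x} y

/-- `X` is fuzzy Dedekind complete. -/
def DedekindComplete (F : FuzzyRiesz X) : Prop :=
  ∀ A : Set X, A.Nonempty → (∃ y, F.UpperBound A y) → ∃ z, F.IsSup A z

/-- `X` is fuzzy Dedekind σ-complete. -/
def DedekindSigmaComplete (F : FuzzyRiesz X) : Prop :=
  ∀ A : Set X, A.Nonempty → A.Countable →
    ((∃ y, F.UpperBound A y) → ∃ z, F.IsSup A z) ∧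
    ((∃ y, F.LowerBound A y) → ∃ z, F.IsInf A z)

/-- `D` is directed to the right. -/
def DirectedRight (F : FuzzyRiesz X) (D : Set X) : Prop :=
  ∀ E : Set X, E ⊆ D → E.Finite → ∃ d ∈ D, ∀ e ∈ E, 1/2 < F.μ e d

/-- `B` is a fuzzy projection band: a fuzzy band such that every `x ∈ X` decomposes
uniquely as `x = x₁ + x₂` with `x₁ ∈ B`, `x₂ ∈ B^d`. -/
def IsProjBand (F : FuzzyRiesz X) (B : Set X) : Prop :=
  IsBand.{v} F B ∧ ∀ x : X, ∃! p : X × X, p.1 ∈ B ∧ p.2 ∈ F.dcomp B ∧ x = p.1 + p.2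

/-- There is an increasing net of elements of `S`, over some nonempty directed
preordered index set, whose supremum is `l`. -/
def IncNetSup (F : FuzzyRiesz X) (S : Set X) (l : X) : Prop :=
  ∃ (ι : Type v) (r : ι → ι → Prop), Nonempty ι ∧ (∀ a, r a a) ∧
    (∀ a b c, r a b → r b c → r a c) ∧ (∀ a b, ∃ c, r a c ∧ r b c) ∧
    ∃ net : ι → X, (∀ a, net a ∈ S) ∧ (∀ a b, r a b → 1/2 < F.μ (net a) (net b)) ∧
      F.IsSup (Set.range net) l

end FuzzyRiesz

/-- The candidate for the fuzzy ideal generated by `D`: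
`{x : ∃ x₁,…,x_n ∈ D, ∃ λ ≥ 0, μ(|x|, λ(|x₁|+…+|x_n|)) > 1/2}`. -/
def genIdeal {X : Type*} [AddCommGroup X] [Module ℝ X] (F : FuzzyRiesz X) (D : Set X) :
    Set X :=
  {x : X | ∃ (n : ℕ) (f : Fin (n + 1) → X) (lam : ℝ), (∀ i, f i ∈ D) ∧ 0 ≤ lam ∧
    1/2 < F.μ (F.fabs x) (lam • ∑ i, F.fabs (f i))}

section Helpers

variable {X : Type*} [AddCommGroup X] [Module ℝ X] (F : FuzzyRiesz X)

lemma fle_refl (x : X) : 1/2 < F.μ x x := by rw [F.refl]; norm_num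

lemma fle_trans {x y z : X} (h1 : 1/2 < F.μ x y) (h2 : 1/2 < F.μ y z) : 1/2 < F.μ x z :=
  lt_of_lt_of_le (lt_min h1 h2) (F.trans x y z)

lemma fle_antisymm {x y : X} (h1 : 1/2 < F.μ x y) (h2 : 1/2 < F.μ y x) : x = y :=
  F.antisymm x y (by linarith)

lemma fle_add_right {x y : X} (h : 1/2 < F.μ x y) (z : X) : 1/2 < F.μ (x + z) (y + z) :=
  lt_of_lt_of_le h (F.add_compat x y z h)

lemma fle_smul {x y : X} {c : ℝ} (hc : 0 ≤ c) (h : 1/2 < F.μ x y) :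
    1/2 < F.μ (c • x) (c • y) :=
  lt_of_lt_of_le h (F.smul_compat x y c hc h)

lemma fle_add {x y a b : X} (h1 : 1/2 < F.μ x y) (h2 : 1/2 < F.μ a b) :
    1/2 < F.μ (x + a) (y + b) := by
  have h3 : 1/2 < F.μ (x + a) (y + a) := fle_add_right F h1 a
  have h4 : 1/2 < F.μ (y + a) (y + b) := by
    have := fle_add_right F h2 y
    simpa [add_comm] using this
  exact fle_trans F h3 h4

lemma fle_fabs_left (x : X) : 1/2 < F.μ x (F.fabs x) := F.le_sup_left x (-x)

lemma fle_fabs_neg (x : X) : 1/2 < F.μ (-x) (F.fabs x) := F.le_sup_right x (-x)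

lemma fabs_le' {x y : X} (h1 : 1/2 < F.μ x y) (h2 : 1/2 < F.μ (-x) y) :
    1/2 < F.μ (F.fabs x) y := F.sup_le x (-x) y h1 h2

lemma fabs_nonneg' (x : X) : 1/2 < F.μ 0 (F.fabs x) := by
  have h1 : 1/2 < F.μ (x + -x) (F.fabs x + F.fabs x) :=
    fle_add F (fle_fabs_left F x) (fle_fabs_neg F x)
  have h2 : 1/2 < F.μ 0 ((2:ℝ) • F.fabs x) := by
    simpa [two_smul] using h1
  have h3 := fle_smul F (c := (1/2 : ℝ)) (by norm_num) h2
  simpa [smul_smul] using h3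

lemma fabs_neg' (x : X) : F.fabs (-x) = F.fabs x := by
  have key : ∀ a : X, 1/2 < F.μ (F.sup (-a) (a)) (F.sup a (-a)) := fun a =>
    F.sup_le _ _ _ (F.le_sup_right a (-a)) (F.le_sup_left a (-a))
  have h1 : F.fabs (-x) = F.sup (-x) x := by simp [FuzzyRiesz.fabs]
  have h2 : 1/2 < F.μ (F.sup (-x) x) (F.sup x (-x)) := key x
  have h3 : 1/2 < F.μ (F.sup x (-x)) (F.sup (-x) x) := by
    have := key (-x); simpa using this
  rw [h1]
  exact fle_antisymm F h2 h3

lemma fabs_of_nonneg' {a : X} (h : 1/2 < F.μ 0 a) : F.fabs a = a := by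
  have hneg : 1/2 < F.μ (-a) 0 := by
    have := fle_add_right F h (-a)
    simpa using this
  have hna : 1/2 < F.μ (-a) a := fle_trans F hneg h
  have h1 : 1/2 < F.μ (F.fabs a) a := fabs_le' F (fle_refl F a) hna
  exact fle_antisymm F h1 (fle_fabs_left F a)

lemma fabs_zero' : F.fabs (0 : X) = 0 := fabs_of_nonneg' F (fle_refl F 0)

lemma fabs_add_le' (x y : X) : 1/2 < F.μ (F.fabs (x + y)) (F.fabs x + F.fabs y) := by
  refine fabs_le' F (fle_add F (fle_fabs_left F x) (fle_fabs_left F y)) ?_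
  have := fle_add F (fle_fabs_neg F x) (fle_fabs_neg F y)
  simpa [neg_add, add_comm] using this

lemma fabs_smul_le_nn {c : ℝ} (hc : 0 ≤ c) (x : X) :
    1/2 < F.μ (F.fabs (c • x)) (c • F.fabs x) := by
  refine fabs_le' F (fle_smul F hc (fle_fabs_left F x)) ?_
  have := fle_smul F hc (fle_fabs_neg F x)
  simpa [smul_neg] using this

lemma fabs_smul_le' (c : ℝ) (x : X) :
    1/2 < F.μ (F.fabs (c • x)) (|c| • F.fabs x) := by
  rcases le_or_gt 0 c with hc | hc
  · rw [abs_of_nonneg hc]; exact fabs_smul_le_nn F hc x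
  · have h0 : c • x = (-c) • (-x) := by simp
    rw [abs_of_neg hc, h0, ← fabs_neg' F x]
    exact fabs_smul_le_nn F (by linarith) (-x)

lemma sum_nonneg' {ι : Type*} (s : Finset ι) (g : ι → X)
    (h : ∀ i ∈ s, 1/2 < F.μ 0 (g i)) : 1/2 < F.μ 0 (∑ i ∈ s, g i) := by
  classical
  induction s using Finset.induction with
  | empty => simpa using fle_refl F (0 : X)
  | @insert a t hni ih =>
    rw [Finset.sum_insert hni]
    have h1 : 1/2 < F.μ (0 + 0 : X) (g a + ∑ i ∈ t, g i) :=
      fle_add F (h a (Finset.mem_insert_self a t))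
        (ih fun i hi => h i (Finset.mem_insert_of_mem hi))
    simpa using h1

lemma smul_mono_scalar {a b : ℝ} {u : X} (ha : 0 ≤ a) (hab : a ≤ b)
    (hu : 1/2 < F.μ 0 u) : 1/2 < F.μ (a • u) (b • u) := by
  have h1 : 1/2 < F.μ 0 ((b - a) • u) := by
    have := fle_smul F (c := b - a) (by linarith) hu
    simpa using this
  have h2 := fle_add_right F h1 (a • u)
  have h3 : (b - a) • u + a • u = b • u := by
    rw [sub_smul]; abel
  rw [h3] at h2
  simpa using h2

lemma ideal_sum_mem {J : Set X} (hJ : F.IsIdeal J) {ι : Type*} (s : Finset ι)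
    (g : ι → X) (h : ∀ i ∈ s, g i ∈ J) : (∑ i ∈ s, g i) ∈ J := by
  classical
  induction s using Finset.induction with
  | empty => simpa using hJ.zero_mem
  | @insert a t hni ih =>
    rw [Finset.sum_insert hni]
    exact hJ.add_mem (h a (Finset.mem_insert_self a t))
      (ih fun i hi => h i (Finset.mem_insert_of_mem hi))

lemma fabs_mem_ideal {J : Set X} (hJ : F.IsIdeal J) {y : X} (hy : y ∈ J) :
    F.fabs y ∈ J := by
  refine hJ.solid (F.fabs y) y ?_ hy
  rw [fabs_of_nonneg' F (fabs_nonneg' F y)]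
  exact fle_refl F _

end Helpers

/-- the fuzzy ideal generated by a nonempty set `D` exists, is unique
(`I` is the smallest fuzzy ideal containing `D` iff `I = genIdeal F D`), and is
given by the explicit description `genIdeal F D`. -/
theorem idealGenerated_spec {X : Type*} [AddCommGroup X] [Module ℝ X]
    (F : FuzzyRiesz X) (D : Set X) (hD : D.Nonempty) :
    (F.IsIdeal (genIdeal F D) ∧ D ⊆ genIdeal F D ∧
      ∀ J : Set X, F.IsIdeal J → D ⊆ J → genIdeal F D ⊆ J) ∧
    (∀ I : Set X, (F.IsIdeal I ∧ D ⊆ I ∧ ∀ J : Set X, F.IsIdeal J → D ⊆ J → I ⊆ J) ↔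
      I = genIdeal F D) := by
  obtain ⟨d, hd⟩ := hD
  -- membership of D
  have hsub : D ⊆ genIdeal F D := by
    intro a ha
    exact ⟨0, fun _ => a, 1, fun _ => ha, zero_le_one, by
      simpa using fle_refl F (F.fabs a)⟩
  -- genIdeal is an ideal
  have hideal : F.IsIdeal (genIdeal F D) := by
    constructor
    · -- zero_mem
      exact ⟨0, fun _ => d, 0, fun _ => hd, le_refl 0, by
        simpa [fabs_zero' F] using fle_refl F (0 : X)⟩
    · -- add_mem
      rintro x y ⟨n, f, lam, hf, hlam, hx⟩ ⟨m, g, ka, hg, hka, hy⟩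
      set M := max lam ka with hM
      have hMnn : 0 ≤ M := le_trans hlam (le_max_left _ _)
      have hcast : (n + m + 1) + 1 = (n + 1) + (m + 1) := by omega
      refine ⟨n + m + 1, fun i => Fin.append f g (Fin.cast hcast i), M, ?_, hMnn, ?_⟩
      · intro i
        refine Fin.addCases (motive := fun j => Fin.append f g j ∈ D)
          (fun i => ?_) (fun i => ?_) (Fin.cast hcast i)
        · simpa using hf i
        · simpa using hg i
      · have hsum : (∑ i : Fin (n + m + 1 + 1), F.fabs (Fin.append f g (Fin.cast hcast i)))
            = (∑ i : Fin (n + 1), F.fabs (f i)) + ∑ i : Fin (m + 1), F.fabs (g i) := by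
          rw [Fintype.sum_equiv (finCongr hcast)
            (fun i => F.fabs (Fin.append f g (Fin.cast hcast i)))
            (fun j => F.fabs (Fin.append f g j)) (fun i => rfl)]
          rw [Fin.sum_univ_add]
          simp [Fin.append_left, Fin.append_right]
        have hSf : 1/2 < F.μ 0 (∑ i : Fin (n + 1), F.fabs (f i)) :=
          sum_nonneg' F _ _ (fun i _ => fabs_nonneg' F (f i))
        have hSg : 1/2 < F.μ 0 (∑ i : Fin (m + 1), F.fabs (g i)) :=
          sum_nonneg' F _ _ (fun i _ => fabs_nonneg' F (g i))
        have hx' : 1/2 < F.μ (F.fabs x) (M • ∑ i : Fin (n + 1), F.fabs (f i)) :=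
          fle_trans F hx (smul_mono_scalar F hlam (le_max_left _ _) hSf)
        have hy' : 1/2 < F.μ (F.fabs y) (M • ∑ i : Fin (m + 1), F.fabs (g i)) :=
          fle_trans F hy (smul_mono_scalar F hka (le_max_right _ _) hSg)
        have h1 := fle_add F hx' hy'
        have h2 := fle_trans F (fabs_add_le' F x y) h1
        rw [hsum, smul_add]
        exact h2
    · -- smul_mem
      rintro c x ⟨n, f, lam, hf, hlam, hx⟩
      refine ⟨n, f, |c| * lam, hf, mul_nonneg (abs_nonneg c) hlam, ?_⟩
      have h1 := fabs_smul_le' F c x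
      have h2 := fle_smul F (abs_nonneg c) hx
      rw [smul_smul] at h2
      exact fle_trans F h1 h2
    · -- solid
      rintro x y h ⟨n, f, lam, hf, hlam, hy⟩
      exact ⟨n, f, lam, hf, hlam, fle_trans F h hy⟩
  -- minimality
  have hmin : ∀ J : Set X, F.IsIdeal J → D ⊆ J → genIdeal F D ⊆ J := by
    rintro J hJ hDJ x ⟨n, f, lam, hf, hlam, hx⟩
    have hsumJ : (∑ i : Fin (n + 1), F.fabs (f i)) ∈ J :=
      ideal_sum_mem F hJ _ _ (fun i _ => fabs_mem_ideal F hJ (hDJ (hf i)))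
    have hlsJ : (lam • ∑ i : Fin (n + 1), F.fabs (f i)) ∈ J := hJ.smul_mem lam hsumJ
    refine hJ.solid x _ ?_ hlsJ
    have hpos : 1/2 < F.μ 0 (lam • ∑ i : Fin (n + 1), F.fabs (f i)) := by
      have := fle_smul F hlam (sum_nonneg' F Finset.univ (fun i => F.fabs (f i))
        (fun i _ => fabs_nonneg' F (f i)))
      simpa using this
    rw [fabs_of_nonneg' F hpos]
    exact hx
  refine ⟨⟨hideal, hsub, hmin⟩, fun I => ⟨?_, ?_⟩⟩
  · rintro ⟨hI, hDI, hImin⟩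
    exact Set.Subset.antisymm (hImin _ hideal hsub) (hmin I hI hDI)
  · rintro rfl
    exact ⟨hideal, hsub, hmin⟩
end

section
/- Let X be a fuzzy Riesz space and J an arbitrary index set. Then: (i) if B₁ is a fuzzy band of X and B₂ is a fuzzy band of B₁ (with the restricted fuzzy order and vector structure), then B₂ is a fuzzy band of X; (ii) if B_j is a fuzzy band of X for each j∈J, then ∩_{j∈J} B_j is a fuzzy band of X. -/
namespace FuzzyRiesz

variable {X : Type*} [AddCommGroup X] [Module ℝ X] (F : FuzzyRiesz X)

lemma lrefl (x : X) : 1/2 < F.μ x x := by rw [F.refl]; norm_num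

lemma ltrans {x y z : X} (h1 : 1/2 < F.μ x y) (h2 : 1/2 < F.μ y z) :
    1/2 < F.μ x z := lt_of_lt_of_le (lt_min h1 h2) (F.trans x y z)

lemma ladd {x y : X} (z : X) (h : 1/2 < F.μ x y) : 1/2 < F.μ (x + z) (y + z) :=
  lt_of_lt_of_le h (F.add_compat x y z h)

lemma ladd' {x y z w : X} (c : X) (h : 1/2 < F.μ x y) (hx : x + c = z) (hy : y + c = w) :
    1/2 < F.μ z w := by subst hx; subst hy; exact F.ladd c h

lemma lneg {x y : X} (h : 1/2 < F.μ x y) : 1/2 < F.μ (-y) (-x) :=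
  F.ladd' (-x - y) h (by abel) (by abel)

lemma lsub {x y : X} (c : X) (h : 1/2 < F.μ x y) : 1/2 < F.μ (x - c) (y - c) :=
  F.ladd' (-c) h (sub_eq_add_neg _ _).symm (sub_eq_add_neg _ _).symm

lemma lsub_left {x y : X} (c : X) (h : 1/2 < F.μ x y) : 1/2 < F.μ (c - y) (c - x) :=
  F.ladd' c (F.lneg h) (by abel) (by abel)

lemma le_fabs (x : X) : 1/2 < F.μ x (F.fabs x) := F.le_sup_left x (-x)

lemma neg_le_fabs (x : X) : 1/2 < F.μ (-x) (F.fabs x) := F.le_sup_right x (-x)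

lemma fabs_nonneg (x : X) : 1/2 < F.μ 0 (F.fabs x) := by
  have h1 : 1/2 < F.μ 0 (F.fabs x + x) := F.ladd' x (F.neg_le_fabs x) (by abel) (by abel)
  have h2 : 1/2 < F.μ (F.fabs x + x) (F.fabs x + F.fabs x) :=
    F.ladd' (F.fabs x) (F.le_fabs x) (by abel) (by abel)
  have h3 : 1/2 < F.μ 0 (F.fabs x + F.fabs x) := F.ltrans h1 h2
  have h4 := lt_of_lt_of_le h3
    (F.smul_compat 0 (F.fabs x + F.fabs x) (1/2) (by norm_num) h3)
  have e1 : (1/2 : ℝ) • (0 : X) = 0 := smul_zero _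
  have e2 : (1/2 : ℝ) • (F.fabs x + F.fabs x) = F.fabs x := by module
  rwa [e1, e2] at h4

lemma fabs_le_self {x : X} (h : 1/2 < F.μ 0 x) : 1/2 < F.μ (F.fabs x) x := by
  have hneg : 1/2 < F.μ (-x) 0 := by have := F.lneg h; rwa [neg_zero] at this
  exact F.sup_le x (-x) x (F.lrefl x) (F.ltrans hneg h)

lemma fabs_le_neg {x : X} (h : 1/2 < F.μ x 0) : 1/2 < F.μ (F.fabs x) (-x) := by
  have h0 : 1/2 < F.μ 0 (-x) := by have := F.lneg h; rwa [neg_zero] at this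
  exact F.sup_le x (-x) (-x) (F.ltrans h h0) (F.lrefl _)

lemma fabs_neg_le (x : X) : 1/2 < F.μ (F.fabs (-x)) (F.fabs x) := by
  refine F.sup_le (-x) (-(-x)) (F.fabs x) (F.neg_le_fabs x) ?_
  rw [neg_neg]; exact F.le_fabs x

lemma fabs_triangle (a b : X) : 1/2 < F.μ (F.fabs (a + b)) (F.fabs a + F.fabs b) := by
  have h1 : 1/2 < F.μ (a + b) (F.fabs a + b) :=
    F.ladd' b (F.le_fabs a) rfl (by abel)
  have h2 : 1/2 < F.μ (F.fabs a + b) (F.fabs a + F.fabs b) :=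
    F.ladd' (F.fabs a) (F.le_fabs b) (by abel) (by abel)
  have h3 : 1/2 < F.μ (-(a + b)) (F.fabs a + -b) :=
    F.ladd' (-b) (F.neg_le_fabs a) (by abel) (by abel)
  have h4 : 1/2 < F.μ (F.fabs a + -b) (F.fabs a + F.fabs b) :=
    F.ladd' (F.fabs a) (F.neg_le_fabs b) (by abel) (by abel)
  exact F.sup_le (a + b) (-(a + b)) _ (F.ltrans h1 h2) (F.ltrans h3 h4)

end FuzzyRiesz

universe u

/-- (i) a fuzzy band of a fuzzy band of `X` is a fuzzy band of `X`;
(ii) an arbitrary intersection of fuzzy bands of `X` is a fuzzy band of `X`. -/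
theorem isBand_trans_and_iInter {X : Type*} [AddCommGroup X] [Module ℝ X]
    (F : FuzzyRiesz X) :
    (∀ B₁ B₂ : Set X, FuzzyRiesz.IsBand.{u} F B₁ → FuzzyRiesz.IsBandIn.{u} F B₁ B₂ →
      FuzzyRiesz.IsBand.{u} F B₂) ∧
    (∀ (J : Type u) (B : J → Set X), (∀ j, FuzzyRiesz.IsBand.{u} F (B j)) →
      FuzzyRiesz.IsBand.{u} F (⋂ j, B j)) := by
  constructor
  · rintro B₁ B₂ ⟨hI1, hC1⟩ ⟨hI2, hC2⟩
    refine ⟨⟨hI2.zero_mem, fun hx hy => hI2.add_mem hx hy,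
      fun c _ hx => hI2.smul_mem c hx, ?_⟩, ?_⟩
    · intro x y hxy hyB2
      exact hI2.solid x (hI1.solid x y hxy (hI2.subset hyB2)) y hyB2 hxy
    · intro ι ip inp idp x l hx hconv
      obtain ⟨y, hdom, hdec, hinf⟩ := hconv
      have hxB1 : ∀ a, x a ∈ B₁ := fun a => hI2.subset (hx a)
      have hlB1 : l ∈ B₁ := @hC1 ι ip inp idp x l hxB1 ⟨y, hdom, hdec, hinf⟩
      set L : X := F.fabs l with hLdef
      have hLB1 : L ∈ B₁ := hI1.solid L l (F.fabs_le_self (F.fabs_nonneg l)) hlB1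
      have hy0 : ∀ a, 1/2 < F.μ 0 (y a) := fun a => F.ltrans (F.fabs_nonneg _) (hdom a)
      set v : ι → X := fun a => F.inf (F.fabs (x a)) L with hvdef
      set w : ι → X := fun a => F.sup (L - y a) 0 with hwdef
      set z : ι → X := fun a => L - w a with hzdef
      -- L - y a ≤ L
      have hLyL : ∀ a, 1/2 < F.μ (L - y a) L := by
        intro a
        have := F.lsub_left L (hy0 a)
        rwa [sub_zero] at this
      -- L - y a ≤ v a
      have h3 : ∀ a, 1/2 < F.μ (L - y a) (v a) := by
        intro a
        have t1 : 1/2 < F.μ L (F.fabs (x a) + F.fabs (l - x a)) := by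
          have := F.fabs_triangle (x a) (l - x a)
          have e : x a + (l - x a) = l := by abel
          rwa [e] at this
        have t2 : 1/2 < F.μ (F.fabs (l - x a)) (F.fabs (x a - l)) := by
          have := F.fabs_neg_le (x a - l)
          rwa [neg_sub] at this
        have t4 : 1/2 < F.μ (F.fabs (l - x a)) (y a) := F.ltrans t2 (hdom a)
        have t5 : 1/2 < F.μ (F.fabs (x a) + F.fabs (l - x a)) (F.fabs (x a) + y a) :=
          F.ladd' (F.fabs (x a)) t4 (by abel) (by abel)
        have t6 : 1/2 < F.μ L (F.fabs (x a) + y a) := F.ltrans t1 t5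
        have t7 : 1/2 < F.μ (L - y a) (F.fabs (x a)) := by
          have := F.lsub (y a) t6
          rwa [add_sub_cancel_right] at this
        exact F.le_inf _ _ _ t7 (hLyL a)
      have hv0 : ∀ a, 1/2 < F.μ 0 (v a) :=
        fun a => F.le_inf _ _ 0 (F.fabs_nonneg _) (F.fabs_nonneg _)
      have hw0 : ∀ a, 1/2 < F.μ 0 (w a) := fun a => F.le_sup_right _ _
      have hwv : ∀ a, 1/2 < F.μ (w a) (v a) :=
        fun a => F.sup_le _ _ _ (h3 a) (hv0 a)
      have hwL : ∀ a, 1/2 < F.μ (w a) L :=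
        fun a => F.sup_le _ _ _ (hLyL a) (F.fabs_nonneg l)
      have hvB2 : ∀ a, v a ∈ B₂ := by
        intro a
        have hvB1 : v a ∈ B₁ :=
          hI1.solid (v a) l
            (F.ltrans (F.fabs_le_self (hv0 a)) (F.inf_le_right _ _)) hlB1
        exact hI2.solid (v a) hvB1 (x a) (hx a)
          (F.ltrans (F.fabs_le_self (hv0 a)) (F.inf_le_left _ _))
      have hwB2 : ∀ a, w a ∈ B₂ := by
        intro a
        have hwB1 : w a ∈ B₁ :=
          hI1.solid (w a) l
            (F.ltrans (F.fabs_le_self (hw0 a)) (hwL a)) hlB1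
        exact hI2.solid (w a) hwB1 (v a) (hvB2 a)
          (F.ltrans (F.fabs_le_self (hw0 a)) (F.ltrans (hwv a) (F.le_fabs (v a))))
      have hwinc : ∀ a b : ι, a ≤ b → 1/2 < F.μ (w a) (w b) := by
        intro a b hab
        refine F.sup_le (L - y a) 0 (w b) ?_ (hw0 b)
        exact F.ltrans (F.lsub_left L (hdec a b hab)) (F.le_sup_left (L - y b) 0)
      have hzdec : F.Decreasing z := fun a b hab => F.lsub_left L (hwinc a b hab)
      have hzB1 : ∀ a, z a ∈ B₁ := by
        intro a
        have hm := hI1.add_mem hLB1 (hI1.smul_mem (-1 : ℝ) (hI2.subset (hwB2 a)))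
        have e : L + (-1 : ℝ) • w a = z a := by
          rw [neg_one_smul, ← sub_eq_add_neg]
        rwa [e] at hm
      have hzdom : ∀ a, 1/2 < F.μ (F.fabs (w a - L)) (z a) := by
        intro a
        have hwa : 1/2 < F.μ (w a - L) 0 := by
          have := F.lsub L (hwL a); rwa [sub_self] at this
        have := F.fabs_le_neg hwa
        rwa [neg_sub] at this
      have hz0 : ∀ a, 1/2 < F.μ 0 (z a) := by
        intro a
        have := F.lsub (w a) (hwL a); rwa [sub_self] at this
      have hzy : ∀ a, 1/2 < F.μ (z a) (y a) := by
        intro a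
        have := F.lsub_left L (F.le_sup_left (L - y a) 0)
        rwa [sub_sub_cancel] at this
      have hinfIn : F.IsInfIn B₁ (Set.range z) 0 := by
        constructor
        · rintro t ⟨a, rfl⟩; exact hz0 a
        · intro b hbB1 hb
          refine hinf.2 b ?_
          rintro t ⟨a, rfl⟩
          exact F.ltrans (hb (z a) ⟨a, rfl⟩) (hzy a)
      have hLB2 : L ∈ B₂ :=
        @hC2 ι ip inp idp w L hwB2 hLB1 ⟨z, hzB1, hzdom, hzdec, hinfIn⟩
      exact hI2.solid l hlB1 L hLB2 (F.le_fabs L)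
  · intro J B hB
    refine ⟨⟨?_, ?_, ?_, ?_⟩, ?_⟩
    · exact Set.mem_iInter.2 fun j => (hB j).1.zero_mem
    · intro x y hx hy
      exact Set.mem_iInter.2 fun j =>
        (hB j).1.add_mem (Set.mem_iInter.1 hx j) (Set.mem_iInter.1 hy j)
    · intro c x hx
      exact Set.mem_iInter.2 fun j => (hB j).1.smul_mem c (Set.mem_iInter.1 hx j)
    · intro x y hxy hy
      exact Set.mem_iInter.2 fun j => (hB j).1.solid x y hxy (Set.mem_iInter.1 hy j)
    · intro ι ip inp idp x l hx hconv
      exact Set.mem_iInter.2 fun j =>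
        @(hB j).2 ι ip inp idp x l (fun a => Set.mem_iInter.1 (hx a) j) hconv
end

section
/- Let D be a nonempty subset of a fuzzy Riesz space X. Then the fuzzy band generated by D (the smallest fuzzy band of X containing D) exists, is unique, and equals B_D = { x ∈ X : there exists a net (x_α) of positive elements of I_D with x_α ↑ |x| }, where I_D is the fuzzy ideal generated by D. -/
universe u

/-- The candidate for the fuzzy band generated by `D` (given the fuzzy ideal `ID`
generated by `D`): all `x` such that some increasing net of positive elements of `ID`
has supremum `|x|`. -/
def genBand {X : Type*} [AddCommGroup X] [Module ℝ X] (F : FuzzyRiesz X) (ID : Set X) :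
    Set X :=
  {x : X | FuzzyRiesz.IncNetSup.{u} F (F.posPart ID) (F.fabs x)}


namespace FuzzyRiesz

universe u'

variable {X : Type*} [AddCommGroup X] [Module ℝ X]

/-- The underlying crisp order of a fuzzy order. -/
def fle (F : FuzzyRiesz X) (x y : X) : Prop := 1/2 < F.μ x y

variable {F : FuzzyRiesz X}

lemma fle_refl (x : X) : F.fle x x := by
  show 1/2 < F.μ x x
  rw [F.refl]; norm_num

lemma fle_trans {x y z : X} (h1 : F.fle x y) (h2 : F.fle y z) : F.fle x z :=
  lt_of_lt_of_le (lt_min h1 h2) (F.trans x y z)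

lemma fle_antisymm {x y : X} (h1 : F.fle x y) (h2 : F.fle y x) : x = y := by
  refine F.antisymm x y ?_
  have h1' : 1/2 < F.μ x y := h1
  have h2' : 1/2 < F.μ y x := h2
  linarith

lemma fle_add_right {x y : X} (z : X) (h : F.fle x y) : F.fle (x + z) (y + z) :=
  lt_of_lt_of_le h (F.add_compat x y z h)

lemma fle_shift {x y : X} (h : F.fle x y) (z : X) {x' y' : X}
    (hx : x + z = x') (hy : y + z = y') : F.fle x' y' := by
  subst hx; subst hy; exact fle_add_right z h

lemma fle_smul {x y : X} (c : ℝ) (hc : 0 ≤ c) (h : F.fle x y) : F.fle (c • x) (c • y) :=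
  lt_of_lt_of_le h (F.smul_compat x y c hc h)

lemma fle_neg {x y : X} (h : F.fle x y) : F.fle (-y) (-x) :=
  fle_shift h (-x - y) (by abel) (by abel)

lemma fle_add {a b c d : X} (h1 : F.fle a b) (h2 : F.fle c d) : F.fle (a + c) (b + d) :=
  fle_trans (fle_add_right c h1) (fle_shift h2 b (by abel) (by abel))

lemma fle_sup_left (x y : X) : F.fle x (F.sup x y) := F.le_sup_left x y
lemma fle_sup_right (x y : X) : F.fle y (F.sup x y) := F.le_sup_right x y
lemma fsup_le {x y z : X} (h1 : F.fle x z) (h2 : F.fle y z) : F.fle (F.sup x y) z :=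
  F.sup_le x y z h1 h2
lemma finf_le_left (x y : X) : F.fle (F.inf x y) x := F.inf_le_left x y
lemma finf_le_right (x y : X) : F.fle (F.inf x y) y := F.inf_le_right x y
lemma fle_inf {x y z : X} (h1 : F.fle z x) (h2 : F.fle z y) : F.fle z (F.inf x y) :=
  F.le_inf x y z h1 h2

lemma fsup_comm (x y : X) : F.sup x y = F.sup y x :=
  fle_antisymm (fsup_le (fle_sup_right y x) (fle_sup_left y x))
    (fsup_le (fle_sup_right x y) (fle_sup_left x y))

lemma fsup_mono_left {a b : X} (u : X) (h : F.fle a b) :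
    F.fle (F.sup a u) (F.sup b u) :=
  fsup_le (fle_trans h (fle_sup_left b u)) (fle_sup_right b u)

lemma fsup_add_finf (a b : X) : F.sup a b + F.inf a b = a + b := by
  have s1 : F.fle (F.sup a b) (a + b - F.inf a b) := by
    apply fsup_le
    · exact fle_shift (finf_le_right a b) (a - F.inf a b) (by abel) (by abel)
    · exact fle_shift (finf_le_left a b) (b - F.inf a b) (by abel) (by abel)
  have s2 : F.fle (a + b - F.sup a b) (F.inf a b) := by
    apply fle_inf
    · exact fle_shift (fle_sup_right a b) (a - F.sup a b) (by abel) (by abel)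
    · exact fle_shift (fle_sup_left a b) (b - F.sup a b) (by abel) (by abel)
  have s2' : F.fle (a + b - F.inf a b) (F.sup a b) :=
    fle_shift s2 (F.sup a b - F.inf a b) (by abel) (by abel)
  have he : F.sup a b = a + b - F.inf a b := fle_antisymm s1 s2'
  rw [he]; abel

lemma finf_eq (a b : X) : F.inf a b = a + b - F.sup a b := by
  have h := fsup_add_finf (F := F) a b
  rw [add_comm] at h
  exact eq_sub_of_add_eq h

lemma fle_zero_fabs (x : X) : F.fle 0 (F.fabs x) := by
  have h1 : F.fle (x + -x) (F.fabs x + F.fabs x) :=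
    fle_add (fle_sup_left x (-x)) (fle_sup_right x (-x))
  rw [add_neg_cancel] at h1
  have h2 := fle_smul (1/2 : ℝ) (by norm_num) h1
  rw [smul_zero] at h2
  have h3 : (1/2 : ℝ) • (F.fabs x + F.fabs x) = F.fabs x := by
    rw [← two_smul ℝ (F.fabs x), smul_smul]; norm_num
  rwa [h3] at h2

lemma fle_self_fabs (x : X) : F.fle x (F.fabs x) := fle_sup_left x (-x)
lemma fle_neg_fabs (x : X) : F.fle (-x) (F.fabs x) := fle_sup_right x (-x)

lemma fabs_of_nonneg {x : X} (h : F.fle 0 x) : F.fabs x = x := by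
  refine fle_antisymm (fsup_le (fle_refl x) ?_) (fle_self_fabs x)
  have h2 := fle_neg h
  rw [neg_zero] at h2
  exact fle_trans h2 h

lemma fabs_of_nonpos {x : X} (h : F.fle x 0) : F.fabs x = -x := by
  refine fle_antisymm (fsup_le ?_ (fle_refl _)) (fle_neg_fabs x)
  have h2 := fle_neg h
  rw [neg_zero] at h2
  exact fle_trans h h2

lemma fabs_neg (x : X) : F.fabs (-x) = F.fabs x := by
  show F.sup (-x) (- -x) = F.sup x (-x)
  rw [neg_neg, fsup_comm]

lemma fabs_zero : F.fabs (0 : X) = 0 := fabs_of_nonneg (fle_refl 0)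

lemma fabs_fabs (x : X) : F.fabs (F.fabs x) = F.fabs x := fabs_of_nonneg (fle_zero_fabs x)

lemma fabs_add_le (x y : X) : F.fle (F.fabs (x + y)) (F.fabs x + F.fabs y) := by
  apply fsup_le
  · exact fle_add (fle_self_fabs x) (fle_self_fabs y)
  · have h := fle_add (F := F) (fle_neg_fabs x) (fle_neg_fabs y)
    rw [← neg_add] at h
    exact h

lemma fsup_smul {c : ℝ} (hc : 0 < c) (a b : X) :
    c • F.sup a b = F.sup (c • a) (c • b) := by
  apply fle_antisymm
  · have h : F.fle (F.sup a b) (c⁻¹ • F.sup (c • a) (c • b)) := by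
      apply fsup_le
      · have h1 := fle_smul (F := F) c⁻¹ (by positivity) (fle_sup_left (c • a) (c • b))
        rwa [inv_smul_smul₀ hc.ne'] at h1
      · have h1 := fle_smul (F := F) c⁻¹ (by positivity) (fle_sup_right (c • a) (c • b))
        rwa [inv_smul_smul₀ hc.ne'] at h1
    have h2 := fle_smul c hc.le h
    rwa [smul_inv_smul₀ hc.ne'] at h2
  · apply fsup_le
    · exact fle_smul c hc.le (fle_sup_left a b)
    · exact fle_smul c hc.le (fle_sup_right a b)

lemma fabs_smul_pos {c : ℝ} (hc : 0 < c) (x : X) :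
    F.fabs (c • x) = c • F.fabs x := by
  show F.sup (c • x) (-(c • x)) = c • F.sup x (-x)
  rw [← smul_neg, fsup_smul hc]

lemma fabs_smul (c : ℝ) (x : X) : F.fabs (c • x) = |c| • F.fabs x := by
  rcases lt_trichotomy c 0 with hc | rfl | hc
  · rw [abs_of_neg hc, ← fabs_neg (c • x), ← neg_smul, fabs_smul_pos (by linarith)]
  · rw [zero_smul, abs_zero, zero_smul, fabs_zero]
  · rw [abs_of_pos hc, fabs_smul_pos hc]

lemma isSup_add_right {κ : Sort*} {a : κ → X} {s : X}
    (h : F.IsSup (Set.range a) s) (t : X) :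
    F.IsSup (Set.range fun β => a β + t) (s + t) := by
  constructor
  · rintro p ⟨β, rfl⟩
    exact fle_add_right t (h.1 _ ⟨β, rfl⟩)
  · intro z hz
    have h1 : ∀ β, F.fle (a β) (z - t) := fun β => by
      have hb : F.fle (a β + t) z := hz _ ⟨β, rfl⟩
      exact fle_shift hb (-t) (by abel) (by abel)
    have h2 : F.fle s (z - t) := h.2 _ (by rintro p ⟨β, rfl⟩; exact h1 β)
    exact fle_shift h2 t rfl (by abel)

lemma isSup_add_left {κ : Sort*} {a : κ → X} {s : X}
    (h : F.IsSup (Set.range a) s) (t : X) :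
    F.IsSup (Set.range fun β => t + a β) (t + s) := by
  constructor
  · rintro p ⟨β, rfl⟩
    show F.fle (t + a β) (t + s)
    exact fle_shift (h.1 _ ⟨β, rfl⟩) t (by abel) (by abel)
  · intro z hz
    have h1 : ∀ β, F.fle (a β) (-t + z) := fun β => by
      have hb : F.fle (t + a β) z := hz _ ⟨β, rfl⟩
      exact fle_shift hb (-t) (by abel) (by abel)
    have h2 : F.fle s (-t + z) := h.2 _ (by rintro p ⟨β, rfl⟩; exact h1 β)
    exact fle_shift h2 t (by abel) (by abel)

/-- Key continuity property: taking `⊓ u` commutes with suprema of nets. -/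
lemma isSup_inf_le {κ : Sort*} {a : κ → X} {s : X}
    (hs : F.IsSup (Set.range a) s) (u z : X)
    (h : ∀ β, F.fle (F.inf (a β) u) z) : F.fle (F.inf s u) z := by
  have key : ∀ β, F.fle (a β) (z + F.sup s u - u) := by
    intro β
    have h2 : F.fle (F.sup (a β) u) (F.sup s u) :=
      fsup_mono_left u (hs.1 _ ⟨β, rfl⟩)
    have h3 : F.fle (F.inf (a β) u + F.sup (a β) u) (z + F.sup s u) := fle_add (h β) h2
    rw [add_comm (F.inf (a β) u), fsup_add_finf] at h3
    exact fle_shift h3 (-u) (by abel) (by abel)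
  have h4 : F.fle s (z + F.sup s u - u) := hs.2 _ (by rintro p ⟨β, rfl⟩; exact key β)
  have h5 := fle_shift h4 (u - F.sup s u)
    (show s + (u - F.sup s u) = s + u - F.sup s u by abel)
    (show (z + F.sup s u - u) + (u - F.sup s u) = z by abel)
  rw [finf_eq]
  exact h5

/-- Finite suprema over a list. -/
def listSup (F : FuzzyRiesz X) {P : Type*} (v : P → X) : List P → X
  | [] => 0
  | p :: s => F.sup (v p) (listSup F v s)

section ListSup

variable {P : Type*} {v : P → X}

lemma fle_zero_listSup (s : List P) : F.fle 0 (listSup F v s) := by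
  induction s with
  | nil => exact fle_refl 0
  | cons p s ih => exact fle_trans ih (fle_sup_right _ _)

lemma fle_listSup_of_mem {p : P} {s : List P} (hp : p ∈ s) :
    F.fle (v p) (listSup F v s) := by
  induction s with
  | nil => simp at hp
  | cons q s ih =>
    rcases List.mem_cons.mp hp with rfl | hp'
    · exact fle_sup_left _ _
    · exact fle_trans (ih hp') (fle_sup_right _ _)

lemma listSup_fle {z : X} {s : List P} (hz : F.fle 0 z)
    (h : ∀ p ∈ s, F.fle (v p) z) : F.fle (listSup F v s) z := by
  induction s with
  | nil => exact hz
  | cons q s ih =>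
    exact fsup_le (h q List.mem_cons_self) (ih fun p hp => h p (List.mem_cons_of_mem q hp))

lemma listSup_mono {s t : List P} (hst : s ⊆ t) :
    F.fle (listSup F v s) (listSup F v t) :=
  listSup_fle (fle_zero_listSup t) (fun p hp => fle_listSup_of_mem (hst hp))

end ListSup

section GenBand

variable {ID : Set X}

lemma posPart_sup_mem (hI : F.IsIdeal ID) {a b : X}
    (ha : a ∈ F.posPart ID) (hb : b ∈ F.posPart ID) : F.sup a b ∈ F.posPart ID := by
  obtain ⟨haI, hap⟩ := ha
  obtain ⟨hbI, hbp⟩ := hb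
  have hap' : F.fle 0 a := hap
  have hbp' : F.fle 0 b := hbp
  have hs : F.fle (F.sup a b) (a + b) :=
    fsup_le (fle_shift hbp' a (by abel) (by abel)) (fle_shift hap' b (by abel) (by abel))
  have h0 : F.fle 0 (F.sup a b) := fle_trans hap' (fle_sup_left a b)
  have h0' : F.fle 0 (a + b) := fle_trans h0 hs
  refine ⟨hI.solid _ _ ?_ (hI.add_mem haI hbI), h0⟩
  rw [fabs_of_nonneg h0, fabs_of_nonneg h0']
  exact hs

lemma listSup_mem_posPart (hI : F.IsIdeal ID) {P : Type*} {v : P → X}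
    (hv : ∀ p, v p ∈ F.posPart ID) (s : List P) : listSup F v s ∈ F.posPart ID := by
  induction s with
  | nil => exact ⟨hI.zero_mem, fle_refl 0⟩
  | cons p s ih => exact posPart_sup_mem hI (hv p) ih

lemma mem_genBand_of_mem (hI : F.IsIdeal ID) {x : X} (hx : x ∈ ID) :
    x ∈ genBand.{u'} F ID := by
  have habs : F.fabs x ∈ F.posPart ID := by
    refine ⟨hI.solid _ _ ?_ hx, fle_zero_fabs x⟩
    rw [fabs_fabs]
    exact fle_refl _
  refine ⟨PUnit.{u'+1}, fun _ _ => True, ⟨⟨⟩⟩, fun _ => trivial, fun _ _ _ _ _ => trivial,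
    fun _ _ => ⟨⟨⟩, trivial, trivial⟩, fun _ => F.fabs x, fun _ => habs,
    fun _ _ _ => fle_refl _, ?_, ?_⟩
  · rintro p ⟨_, rfl⟩
    exact fle_refl _
  · intro z hz
    exact hz _ ⟨⟨⟩, rfl⟩

lemma genBand_solid (hI : F.IsIdeal ID) (x y : X)
    (hxy : 1/2 < F.μ (F.fabs x) (F.fabs y)) (hy : y ∈ genBand.{u'} F ID) :
    x ∈ genBand.{u'} F ID := by
  obtain ⟨κ, r, hne, hrefl, htrans, hdir, a, hmem, hincr, hsup⟩ := hy
  refine ⟨κ, r, hne, hrefl, htrans, hdir, fun β => F.inf (a β) (F.fabs x), ?_, ?_, ?_, ?_⟩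
  · intro β
    obtain ⟨hβI, hβp⟩ := hmem β
    have h0 : F.fle 0 (F.inf (a β) (F.fabs x)) := fle_inf hβp (fle_zero_fabs x)
    refine ⟨hI.solid _ _ ?_ hβI, h0⟩
    rw [fabs_of_nonneg h0, fabs_of_nonneg (show F.fle 0 (a β) from hβp)]
    exact finf_le_left _ _
  · intro α β hab
    exact fle_inf (fle_trans (finf_le_left _ _) (hincr α β hab)) (finf_le_right _ _)
  · rintro p ⟨β, rfl⟩
    exact finf_le_right _ _
  · intro z hz
    have h1 : F.fle (F.inf (F.fabs y) (F.fabs x)) z :=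
      isSup_inf_le hsup _ z (fun β => hz _ ⟨β, rfl⟩)
    exact fle_trans (fle_inf hxy (fle_refl _)) h1

lemma genBand_add (hI : F.IsIdeal ID) {x y : X}
    (hx : x ∈ genBand.{u'} F ID) (hy : y ∈ genBand.{u'} F ID) :
    x + y ∈ genBand.{u'} F ID := by
  obtain ⟨κ₁, r₁, hne₁, hrefl₁, htrans₁, hdir₁, a, hmem₁, hincr₁, hsup₁⟩ := hx
  obtain ⟨κ₂, r₂, hne₂, hrefl₂, htrans₂, hdir₂, b, hmem₂, hincr₂, hsup₂⟩ := hy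
  refine ⟨κ₁ × κ₂, fun p q => r₁ p.1 q.1 ∧ r₂ p.2 q.2,
    ⟨(hne₁.some, hne₂.some)⟩, fun p => ⟨hrefl₁ p.1, hrefl₂ p.2⟩,
    fun p q t h1 h2 => ⟨htrans₁ _ _ _ h1.1 h2.1, htrans₂ _ _ _ h1.2 h2.2⟩, ?_,
    fun p => F.inf (a p.1 + b p.2) (F.fabs (x + y)), ?_, ?_, ?_, ?_⟩
  · intro p q
    obtain ⟨c₁, hc₁, hc₁'⟩ := hdir₁ p.1 q.1
    obtain ⟨c₂, hc₂, hc₂'⟩ := hdir₂ p.2 q.2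
    exact ⟨(c₁, c₂), ⟨hc₁, hc₂⟩, ⟨hc₁', hc₂'⟩⟩
  · intro p
    have hsum : F.fle 0 (a p.1 + b p.2) := by
      have h := fle_add (show F.fle 0 (a p.1) from (hmem₁ p.1).2)
        (show F.fle 0 (b p.2) from (hmem₂ p.2).2)
      rwa [add_zero] at h
    have h0 : F.fle 0 (F.inf (a p.1 + b p.2) (F.fabs (x + y))) :=
      fle_inf hsum (fle_zero_fabs _)
    refine ⟨hI.solid _ _ ?_ (hI.add_mem (hmem₁ p.1).1 (hmem₂ p.2).1), h0⟩
    rw [fabs_of_nonneg h0, fabs_of_nonneg hsum]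
    exact finf_le_left _ _
  · intro p q hpq
    exact fle_inf (fle_trans (finf_le_left _ _)
      (fle_add (hincr₁ _ _ hpq.1) (hincr₂ _ _ hpq.2))) (finf_le_right _ _)
  · rintro w ⟨p, rfl⟩
    exact finf_le_right _ _
  · intro z hz
    have step1 : ∀ β, F.fle (F.inf (F.fabs x + b β) (F.fabs (x + y))) z := fun β =>
      isSup_inf_le (isSup_add_right hsup₁ (b β)) _ z (fun α => hz _ ⟨(α, β), rfl⟩)
    have step2 : F.fle (F.inf (F.fabs x + F.fabs y) (F.fabs (x + y))) z :=
      isSup_inf_le (isSup_add_left hsup₂ (F.fabs x)) _ z step1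
    exact fle_trans (fle_inf (fabs_add_le x y) (fle_refl _)) step2

lemma genBand_smul (hI : F.IsIdeal ID) (c : ℝ) {x : X}
    (hx : x ∈ genBand.{u'} F ID) : c • x ∈ genBand.{u'} F ID := by
  rcases eq_or_ne c 0 with rfl | hc
  · rw [zero_smul]
    exact mem_genBand_of_mem hI hI.zero_mem
  obtain ⟨κ, r, hne, hrefl, htrans, hdir, a, hmem, hincr, hsup⟩ := hx
  have hd : 0 < |c| := abs_pos.mpr hc
  refine ⟨κ, r, hne, hrefl, htrans, hdir, fun β => |c| • a β, ?_, ?_, ?_⟩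
  · intro β
    refine ⟨hI.smul_mem _ (hmem β).1, ?_⟩
    have h := fle_smul |c| hd.le (show F.fle 0 (a β) from (hmem β).2)
    rwa [smul_zero] at h
  · exact fun α β h => fle_smul _ hd.le (hincr α β h)
  · rw [show F.fabs (c • x) = |c| • F.fabs x from fabs_smul c x]
    constructor
    · rintro p ⟨β, rfl⟩
      exact fle_smul _ hd.le (hsup.1 _ ⟨β, rfl⟩)
    · intro z hz
      have h1 : ∀ β, F.fle (a β) (|c|⁻¹ • z) := by
        intro β
        have hb : F.fle (|c| • a β) z := hz _ ⟨β, rfl⟩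
        have h := fle_smul (F := F) |c|⁻¹ (by positivity) hb
        rwa [inv_smul_smul₀ hd.ne'] at h
      have h2 := hsup.2 _ (by rintro p ⟨β, rfl⟩; exact h1 β)
      have h3 := fle_smul |c| hd.le h2
      rwa [smul_inv_smul₀ hd.ne'] at h3

lemma genBand_orderClosed (hI : F.IsIdeal ID) :
    OrderClosed.{u'} F (genBand.{u'} F ID) := by
  intro ι _ _ _ x l hx hconv
  obtain ⟨y, hdom, hdec, hinf⟩ := hconv
  simp only [genBand, Set.mem_setOf_eq] at hx
  choose κ r hne hrefl htrans hdir a hmem hincr hsup using hx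
  classical
  set d : ι → X := fun γ => F.sup (F.fabs l - y γ) 0 with hd_def
  have hy0 : ∀ γ, F.fle 0 (y γ) := fun γ => hinf.1 _ ⟨γ, rfl⟩
  have hd0 : ∀ γ, F.fle 0 (d γ) := fun γ => fle_sup_right _ _
  have hd_le_l : ∀ γ, F.fle (d γ) (F.fabs l) := by
    intro γ
    apply fsup_le
    · have hn := fle_neg (hy0 γ)
      rw [neg_zero] at hn
      exact fle_shift hn (F.fabs l) (by abel) (by abel)
    · exact fle_zero_fabs l
  have hd_le_x : ∀ γ, F.fle (d γ) (F.fabs (x γ)) := by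
    intro γ
    have t1 : F.fle (F.fabs l) (F.fabs (x γ - l) + F.fabs (x γ)) := by
      have h := fabs_add_le (F := F) (l - x γ) (x γ)
      rw [show l - x γ + x γ = l by abel,
        show l - x γ = -(x γ - l) by abel, fabs_neg] at h
      exact h
    have t2 : F.fle (F.fabs (x γ - l)) (y γ) := hdom γ
    have t3 : F.fle (F.fabs l) (y γ + F.fabs (x γ)) :=
      fle_trans t1 (fle_add t2 (fle_refl _))
    have t4 : F.fle (F.fabs l - y γ) (F.fabs (x γ)) :=
      fle_shift t3 (-y γ) (by abel) (by abel)
    exact fsup_le t4 (fle_zero_fabs _)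
  set v : (Σ γ : ι, κ γ) → X := fun p => F.inf (a p.1 p.2) (d p.1) with hv_def
  have hv_mem : ∀ p, v p ∈ F.posPart ID := by
    intro p
    have h0 : F.fle 0 (v p) :=
      fle_inf (show F.fle 0 (a p.1 p.2) from (hmem p.1 p.2).2) (hd0 p.1)
    refine ⟨hI.solid _ _ ?_ (hmem p.1 p.2).1, h0⟩
    rw [fabs_of_nonneg h0, fabs_of_nonneg (show F.fle 0 (a p.1 p.2) from (hmem p.1 p.2).2)]
    exact finf_le_left _ _
  refine ⟨List (Σ γ : ι, κ γ), fun s t => s ⊆ t, ⟨[]⟩, fun s => List.Subset.refl s,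
    fun s t w h1 h2 => List.Subset.trans h1 h2,
    fun s t => ⟨s ++ t, List.subset_append_left s t, List.subset_append_right s t⟩,
    listSup F v, fun s => listSup_mem_posPart hI hv_mem s,
    fun s t hst => listSup_mono hst, ?_, ?_⟩
  · rintro w ⟨s, rfl⟩
    exact listSup_fle (fle_zero_fabs l)
      (fun p _ => fle_trans (finf_le_right _ _) (hd_le_l p.1))
  · intro z hz
    have hvz : ∀ p, F.fle (v p) z := fun p =>
      fle_trans (fle_listSup_of_mem (List.mem_singleton.mpr rfl)) (hz _ ⟨[p], rfl⟩)
    have hdz : ∀ γ, F.fle (d γ) z := fun γ =>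
      fle_trans (fle_inf (hd_le_x γ) (fle_refl _))
        (isSup_inf_le (hsup γ) (d γ) z (fun β => hvz ⟨γ, β⟩))
    have hlow : ∀ γ, F.fle (F.fabs l - z) (y γ) := by
      intro γ
      have h1 : F.fle (F.fabs l - y γ) z := fle_trans (fle_sup_left _ _) (hdz γ)
      exact fle_shift h1 (y γ - z) (by abel) (by abel)
    have h2 := hinf.2 _ (by rintro w ⟨γ, rfl⟩; exact hlow γ)
    exact fle_shift h2 z (by abel) (by abel)

lemma genBand_min (hI : F.IsIdeal ID) {B : Set X} (hB : IsBand.{u'} F B)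
    (hIDB : ID ⊆ B) : genBand.{u'} F ID ⊆ B := by
  intro x hx
  obtain ⟨κ, r, hne, hrefl, htrans, hdir, a, hmem, hincr, hsup⟩ := hx
  letI : Preorder κ := { le := r, le_refl := hrefl, le_trans := htrans }
  haveI : IsDirected κ (· ≤ ·) := ⟨hdir⟩
  haveI : Nonempty κ := hne
  have habs : F.fabs x ∈ B := by
    apply hB.2 κ a (F.fabs x) (fun β => hIDB (hmem β).1)
    refine ⟨fun β => F.fabs x - a β, ?_, ?_, ?_, ?_⟩
    · intro β
      have hβ : F.fle (a β) (F.fabs x) := hsup.1 _ ⟨β, rfl⟩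
      have hle : F.fle (a β - F.fabs x) 0 := fle_shift hβ (-F.fabs x) (by abel) (by abel)
      show 1/2 < F.μ (F.fabs (a β - F.fabs x)) (F.fabs x - a β)
      rw [fabs_of_nonpos hle, neg_sub]
      exact fle_refl _
    · intro α β h
      show F.fle (F.fabs x - a β) (F.fabs x - a α)
      exact fle_shift (fle_neg (hincr α β h)) (F.fabs x) (by abel) (by abel)
    · rintro w ⟨β, rfl⟩
      show F.fle 0 (F.fabs x - a β)
      exact fle_shift (hsup.1 _ ⟨β, rfl⟩) (-a β) (by abel) (by abel)
    · intro w hw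
      have h1 : ∀ β, F.fle (a β) (F.fabs x - w) := fun β => by
        have hb : F.fle w (F.fabs x - a β) := hw _ ⟨β, rfl⟩
        exact fle_shift hb (a β - w) (by abel) (by abel)
      have h2 := hsup.2 _ (by rintro p ⟨β, rfl⟩; exact h1 β)
      exact fle_shift h2 (w - F.fabs x) (by abel) (by abel)
  exact hB.1.solid x (F.fabs x) (by rw [fabs_fabs]; exact fle_refl _) habs

end GenBand

end FuzzyRiesz

/-- the fuzzy band generated by a nonempty set `D` exists, is unique
(it is the smallest fuzzy band containing `D`), and equals
`{x : ∃ net (x_α) in I_D⁺ with x_α ↑ |x|}`, where `I_D` is the fuzzy ideal generated by `D`. -/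
theorem bandGenerated_spec {X : Type*} [AddCommGroup X] [Module ℝ X]
    (F : FuzzyRiesz X) (D : Set X) (hD : D.Nonempty) (ID : Set X)
    (hID : F.IsIdeal ID ∧ D ⊆ ID ∧ ∀ J : Set X, F.IsIdeal J → D ⊆ J → ID ⊆ J) :
    (FuzzyRiesz.IsBand.{u} F (genBand.{u} F ID) ∧ D ⊆ genBand.{u} F ID ∧
      ∀ B : Set X, FuzzyRiesz.IsBand.{u} F B → D ⊆ B → genBand.{u} F ID ⊆ B) ∧
    (∀ C : Set X,
      (FuzzyRiesz.IsBand.{u} F C ∧ D ⊆ C ∧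
        ∀ B : Set X, FuzzyRiesz.IsBand.{u} F B → D ⊆ B → C ⊆ B) ↔
      C = genBand.{u} F ID) := by
  obtain ⟨hI, hDI, hminI⟩ := hID
  have hband : FuzzyRiesz.IsBand.{u} F (genBand.{u} F ID) :=
    ⟨⟨FuzzyRiesz.mem_genBand_of_mem hI hI.zero_mem,
      fun {x y} hx hy => FuzzyRiesz.genBand_add hI hx hy,
      fun c {x} hx => FuzzyRiesz.genBand_smul hI c hx,
      fun x y h hy => FuzzyRiesz.genBand_solid hI x y h hy⟩,
      FuzzyRiesz.genBand_orderClosed hI⟩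
  have hDg : D ⊆ genBand.{u} F ID := fun x hx => FuzzyRiesz.mem_genBand_of_mem hI (hDI hx)
  have hminB : ∀ B : Set X, FuzzyRiesz.IsBand.{u} F B → D ⊆ B → genBand.{u} F ID ⊆ B :=
    fun B hB hDB => FuzzyRiesz.genBand_min hI hB (hminI B hB.1 hDB)
  refine ⟨⟨hband, hDg, hminB⟩, ?_⟩
  intro C
  constructor
  · rintro ⟨hCband, hDC, hCmin⟩
    exact Set.Subset.antisymm (hCmin _ hband hDg) (hminB C hCband hDC)
  · rintro rfl
    exact ⟨hband, hDg, hminB⟩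
end
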